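/- Let ℝ(X,Y) be the field of rational functions in two variables over ℝ (the fraction field of the polynomial ring ℝ[X,Y]). Then the space M(ℝ(X,Y)) of ℝ-places of ℝ(X,Y), equipped with the quotient topology induced from the Harrison topology on the space of orderings of ℝ(X,Y), is not metrizable. -/

import Mathlib

attribute [local instance] Classical.propDecidable

/-- An ordering of a field `K`: `P + P ⊆ P`, `P·P ⊆ P`, `P ∪ (−P) = K`, `P ∩ (−P) = {0}`. -/
def IsOrdering {K : Type*} [Field K] (P : Set K) : Prop :=
  (∀ x ∈ P, ∀ y ∈ P, x + y ∈ P) ∧ (∀ x ∈ P, ∀ y ∈ P, x * y ∈ P) ∧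
    (∀ x : K, x ∈ P ∨ -x ∈ P) ∧ (∀ x : K, x ∈ P → -x ∈ P → x = 0)

/-- The valuation ring `A(P) = {x : ∃ q ∈ ℚ, q > 0, q − x ∈ P and q + x ∈ P}` of an ordering. -/
def orderValRing {K : Type*} [Field K] (P : Set K) : Set K :=
  {x : K | ∃ q : ℚ, 0 < q ∧ (q : K) - x ∈ P ∧ (q : K) + x ∈ P}

/-- The ℝ-place `λ_P : K → ℝ ∪ {∞}` associated to an ordering `P`:
`λ_P(x) = sup {q ∈ ℚ : x − q ∈ P}` for `x ∈ A(P)` and `∞` otherwise. -/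
noncomputable def rPlace {K : Type*} [Field K] (P : Set K) (x : K) : WithTop ℝ :=
  if x ∈ orderValRing P then
    ((sSup {r : ℝ | ∃ q : ℚ, r = (q : ℝ) ∧ x - (q : K) ∈ P} : ℝ) : WithTop ℝ)
  else ⊤

/-- The space of orderings of `K` with the Harrison topology. -/
def OrderSpace (K : Type*) [Field K] : Type _ := {P : Set K // IsOrdering P}

instance (K : Type*) [Field K] : TopologicalSpace (OrderSpace K) :=
  TopologicalSpace.generateFrom
    {s : Set (OrderSpace K) | ∃ a : K, a ≠ 0 ∧ s = {P : OrderSpace K | a ∈ P.1}}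

/-- The space `M(K)` of ℝ-places of `K`. -/
def PlaceSpace (K : Type*) [Field K] : Type _ :=
  {φ : K → WithTop ℝ // ∃ P : Set K, IsOrdering P ∧ φ = rPlace P}

/-- The canonical surjection `λ : X(K) → M(K)`, `P ↦ λ_P`. -/
noncomputable def lambdaMap (K : Type*) [Field K] : OrderSpace K → PlaceSpace K :=
  fun P => ⟨rPlace P.1, P.1, P.2, rfl⟩

/-- `M(K)` carries the quotient topology induced by `λ`. -/
noncomputable instance (K : Type*) [Field K] : TopologicalSpace (PlaceSpace K) :=
  TopologicalSpace.coinduced (lambdaMap K) inferInstance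



section Cone
variable {R : Type*} [CommRing R]

structure IsConed (Pos : R → Prop) : Prop where
  add : ∀ {a b}, Pos a → Pos b → Pos (a + b)
  mul : ∀ {a b}, Pos a → Pos b → Pos (a * b)
  total : ∀ a, a ≠ 0 → Pos a ∨ Pos (-a)
  not_both : ∀ a, Pos a → Pos (-a) → False

lemma IsConed.ne_zero {Pos : R → Prop} (h : IsConed Pos) {a} (ha : Pos a) : a ≠ 0 := by
  rintro rfl
  exact h.not_both 0 ha (by simpa using ha)

open Polynomial

lemma trailingCoeff_neg' {a : Polynomial R} : (-a).trailingCoeff = -a.trailingCoeff := by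
  unfold Polynomial.trailingCoeff
  rw [natTrailingDegree_neg, coeff_neg]

lemma tc_add_aux {Pos : R → Prop} (h : IsConed Pos) {a b : Polynomial R}
    (hpa : Pos a.trailingCoeff) (hpb : Pos b.trailingCoeff)
    (hle : a.natTrailingDegree ≤ b.natTrailingDegree) : Pos (a + b).trailingCoeff := by
  have ha0 : a ≠ 0 := fun h0 => h.ne_zero hpa (by simp [h0])
  have hb0 : b ≠ 0 := fun h0 => h.ne_zero hpb (by simp [h0])
  set m := a.natTrailingDegree with hm
  rcases lt_or_eq_of_le hle with hlt | heq
  · have hco : (a + b).coeff m = a.trailingCoeff := by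
      rw [coeff_add, coeff_eq_zero_of_lt_natTrailingDegree hlt, add_zero]
      rfl
    have hne : (a + b).coeff m ≠ 0 := by rw [hco]; exact h.ne_zero hpa
    have hlow : ∀ k < m, (a + b).coeff k = 0 := by
      intro k hk
      rw [coeff_add, coeff_eq_zero_of_lt_natTrailingDegree hk,
        coeff_eq_zero_of_lt_natTrailingDegree (hk.trans hlt), add_zero]
    have hab0 : a + b ≠ 0 := fun h0 => hne (by simp [h0])
    have hntd : (a + b).natTrailingDegree = m :=
      le_antisymm (natTrailingDegree_le_of_ne_zero hne) (le_natTrailingDegree hab0 hlow)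
    have : (a + b).trailingCoeff = a.trailingCoeff := by
      unfold Polynomial.trailingCoeff
      rw [hntd, hco]
      rfl
    rw [this]; exact hpa
  · have hco : (a + b).coeff m = a.trailingCoeff + b.trailingCoeff := by
      rw [coeff_add]
      unfold Polynomial.trailingCoeff
      rw [← hm, heq]
    have hpos : Pos ((a + b).coeff m) := by rw [hco]; exact h.add hpa hpb
    have hne : (a + b).coeff m ≠ 0 := h.ne_zero hpos
    have hlow : ∀ k < m, (a + b).coeff k = 0 := by
      intro k hk
      rw [coeff_add, coeff_eq_zero_of_lt_natTrailingDegree hk,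
        coeff_eq_zero_of_lt_natTrailingDegree (heq ▸ hk), add_zero]
    have hab0 : a + b ≠ 0 := fun h0 => hne (by simp [h0])
    have hntd : (a + b).natTrailingDegree = m :=
      le_antisymm (natTrailingDegree_le_of_ne_zero hne) (le_natTrailingDegree hab0 hlow)
    have : (a + b).trailingCoeff = (a+b).coeff m := by
      unfold Polynomial.trailingCoeff
      rw [hntd]
    rw [this]; exact hpos

lemma IsConed.poly [IsDomain R] {Pos : R → Prop} (h : IsConed Pos) :
    IsConed (fun p : Polynomial R => Pos p.trailingCoeff) := by
  constructor
  · intro a b hpa hpb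
    rcases le_total a.natTrailingDegree b.natTrailingDegree with hle | hle
    · exact tc_add_aux h hpa hpb hle
    · rw [add_comm]; exact tc_add_aux h hpb hpa hle
  · intro a b hpa hpb
    rw [trailingCoeff_mul]
    exact h.mul hpa hpb
  · intro a ha
    have : a.trailingCoeff ≠ 0 := fun h0 => ha (trailingCoeff_eq_zero.mp h0)
    rcases h.total _ this with hp | hp
    · exact Or.inl hp
    · right; rw [trailingCoeff_neg']; exact hp
  · intro a hp hq
    rw [trailingCoeff_neg'] at hq
    exact h.not_both _ hp hq

lemma isConed_real : IsConed (fun r : ℝ => 0 < r) := by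
  constructor
  · intro a b ha hb; linarith
  · intro a b ha hb; exact mul_pos ha hb
  · intro a ha; rcases lt_trichotomy a 0 with h|h|h
    · right; linarith
    · exact absurd h ha
    · exact Or.inl h
  · intro a ha hb; linarith

/-- sign on `ℝ[s][t]`-like iterated polynomials: trailing coefficient twice. -/
def Pos2 (p : Polynomial (Polynomial ℝ)) : Prop := 0 < p.trailingCoeff.trailingCoeff

lemma isConed_Pos2 : IsConed Pos2 := isConed_real.poly.poly

end Cone


noncomputable section RXY

abbrev MvP : Type := MvPolynomial (Fin 2) ℝ
abbrev PP : Type := Polynomial (Polynomial ℝ)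

def Phi : MvP →ₐ[ℝ] PP := MvPolynomial.aeval ![Polynomial.X, Polynomial.C Polynomial.X]

@[simp] lemma Phi_X0 : Phi (MvPolynomial.X 0) = Polynomial.X := by simp [Phi]
@[simp] lemma Phi_X1 : Phi (MvPolynomial.X 1) = Polynomial.C Polynomial.X := by simp [Phi]
@[simp] lemma Phi_C (r : ℝ) : Phi (MvPolynomial.C r) = Polynomial.C (Polynomial.C r) := by
  simp [Phi, MvPolynomial.algebraMap_eq]

def beta : PP →+* MvP :=
  Polynomial.eval₂RingHom
    (Polynomial.eval₂RingHom (MvPolynomial.C) (MvPolynomial.X 1)) (MvPolynomial.X 0)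

lemma beta_Phi : Function.LeftInverse beta Phi := by
  have h : (beta.comp (Phi.toRingHom)) = RingHom.id MvP := by
    apply MvPolynomial.ringHom_ext
    · intro r
      simp [beta, Phi, MvPolynomial.algebraMap_eq]
    · intro i
      fin_cases i <;> simp [beta, Phi]
  intro f
  exact RingHom.congr_fun h f

lemma Phi_inj : Function.Injective Phi := beta_Phi.injective

def tauM : MvP →ₐ[ℝ] MvP := MvPolynomial.aeval ![(MvPolynomial.X 0)^2, MvPolynomial.X 1]

lemma Phi_tauM (f : MvP) :
    Phi (tauM f) = Polynomial.aeval (Polynomial.X ^ 2 : PP) (Phi f) := by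
  have h : Phi.comp tauM
      = ((Polynomial.aeval (Polynomial.X ^ 2 : PP)).restrictScalars ℝ).comp Phi := by
    apply MvPolynomial.algHom_ext
    intro i
    fin_cases i <;> simp [tauM, Polynomial.algebraMap_eq]
  exact AlgHom.congr_fun h f

lemma tauM_ker {f : MvP} (h0 : tauM f = 0) : f = 0 := by
  have h1 : (Phi f).comp (Polynomial.X ^ 2) = 0 := by
    have h2 := Phi_tauM f
    rw [h0, map_zero] at h2
    rw [Polynomial.comp, ← Polynomial.algebraMap_eq, ← Polynomial.aeval_def]
    exact h2.symm
  rcases Polynomial.comp_eq_zero_iff.mp h1 with h2 | ⟨-, h3⟩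
  · exact Phi_inj (by rw [h2, map_zero])
  · exfalso
    simp only [Polynomial.coeff_X_pow] at h3
    norm_num at h3


lemma tauM_inj : Function.Injective tauM := by
  intro f g h
  have := tauM_ker (f := f - g) (by rw [map_sub, h, sub_self])
  exact sub_eq_zero.mp this

def sigmaM (c : ℝ) : MvP →ₐ[ℝ] MvP :=
  MvPolynomial.aeval
    ![MvPolynomial.X 1,
      MvPolynomial.C c * (MvPolynomial.X 1)^4 + (MvPolynomial.X 1)^5 + MvPolynomial.X 0]

def sigmaInv (c : ℝ) : MvP →ₐ[ℝ] MvP :=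
  MvPolynomial.aeval
    ![MvPolynomial.X 1 - MvPolynomial.C c * (MvPolynomial.X 0)^4 - (MvPolynomial.X 0)^5,
      MvPolynomial.X 0]

lemma sigma_leftInv (c : ℝ) : Function.LeftInverse (sigmaInv c) (sigmaM c) := by
  have h : (sigmaInv c).comp (sigmaM c) = AlgHom.id ℝ MvP := by
    apply MvPolynomial.algHom_ext
    intro i
    fin_cases i
    · simp [sigmaM, sigmaInv]
    · simp [sigmaM, sigmaInv]

  intro f
  exact AlgHom.congr_fun h f

lemma sigmaM_inj (c : ℝ) : Function.Injective (sigmaM c) := (sigma_leftInv c).injective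

def thetaM (c : ℝ) : MvP →ₐ[ℝ] MvP := (sigmaM c).comp tauM

lemma thetaM_inj (c : ℝ) : Function.Injective (thetaM c) := by
  intro f g h
  exact tauM_inj (sigmaM_inj c h)

@[simp] lemma thetaM_X0 (c : ℝ) : thetaM c (MvPolynomial.X 0) = (MvPolynomial.X 1)^2 := by
  simp [thetaM, tauM, sigmaM]

@[simp] lemma thetaM_X1 (c : ℝ) :
    thetaM c (MvPolynomial.X 1)
      = MvPolynomial.C c * (MvPolynomial.X 1)^4 + (MvPolynomial.X 1)^5 + MvPolynomial.X 0 := by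
  simp [thetaM, tauM, sigmaM]

@[simp] lemma thetaM_C (c r : ℝ) : thetaM c (MvPolynomial.C r) = MvPolynomial.C r := by
  simp [thetaM, tauM, sigmaM, MvPolynomial.algebraMap_eq]

abbrev KK : Type := FractionRing MvP

def iK : MvP →+* KK := algebraMap MvP KK

lemma iK_inj : Function.Injective iK := IsFractionRing.injective MvP KK

lemma iK_ne {g : MvP} (hg : g ≠ 0) : iK g ≠ 0 := fun h0 => hg (iK_inj (by rw [h0, map_zero]))

lemma gc_inj (c : ℝ) : Function.Injective (iK.comp (thetaM c).toRingHom) := by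
  intro f g h
  exact thetaM_inj c (iK_inj h)

def Psi (c : ℝ) : KK →+* KK := IsFractionRing.lift (gc_inj c)

@[simp] lemma Psi_iK (c : ℝ) (f : MvP) : Psi c (iK f) = iK (thetaM c f) :=
  IsFractionRing.lift_algebraMap (gc_inj c) f

lemma Psi_inj (c : ℝ) : Function.Injective (Psi c) := (Psi c).injective

end RXY

noncomputable section Cones

def PosM (f : MvP) : Prop := Pos2 (Phi f)

lemma isConed_PosM : IsConed PosM := by
  constructor
  · intro a b ha hb
    unfold PosM at *
    rw [map_add]
    exact isConed_Pos2.add ha hb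
  · intro a b ha hb
    unfold PosM at *
    rw [map_mul]
    exact isConed_Pos2.mul ha hb
  · intro a ha
    have h : Phi a ≠ 0 := fun h0 => ha (Phi_inj (by rw [h0, map_zero]))
    rcases isConed_Pos2.total _ h with hp | hp
    · exact Or.inl hp
    · right
      unfold PosM
      rw [map_neg]
      exact hp
  · intro a hp hq
    unfold PosM at *
    rw [map_neg] at hq
    exact isConed_Pos2.not_both _ hp hq

lemma posM_sq {g : MvP} (hg : g ≠ 0) : PosM (g * g) := by
  rcases isConed_PosM.total g hg with h | h
  · exact isConed_PosM.mul h h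
  · have h2 := isConed_PosM.mul h h
    rw [neg_mul_neg] at h2
    exact h2

def PosK (z : KK) : Prop := ∃ f g : MvP, g ≠ 0 ∧ z = iK f / iK g ∧ PosM (f * g)

lemma posK_ne_zero {z : KK} (hz : PosK z) : z ≠ 0 := by
  obtain ⟨f, g, hg, rfl, hfg⟩ := hz
  have hf : f ≠ 0 := fun h0 => isConed_PosM.ne_zero hfg (by rw [h0, zero_mul])
  exact div_ne_zero (iK_ne hf) (iK_ne hg)

lemma posK_add {z w : KK} (hz : PosK z) (hw : PosK w) : PosK (z + w) := by
  obtain ⟨f, g, hg, rfl, hfg⟩ := hz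
  obtain ⟨f', g', hg', rfl, hfg'⟩ := hw
  refine ⟨f * g' + f' * g, g * g', mul_ne_zero hg hg', ?_, ?_⟩
  · rw [div_add_div _ _ (iK_ne hg) (iK_ne hg'), ← map_mul, ← map_mul, ← map_mul, ← map_add]
    ring_nf
  · have h1 : PosM ((f * g) * (g' * g')) := isConed_PosM.mul hfg (posM_sq hg')
    have h2 : PosM ((f' * g') * (g * g)) := isConed_PosM.mul hfg' (posM_sq hg)
    have h3 : (f * g' + f' * g) * (g * g') = (f * g) * (g' * g') + (f' * g') * (g * g) := by
      ring
    rw [h3]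
    exact isConed_PosM.add h1 h2

lemma posK_mul {z w : KK} (hz : PosK z) (hw : PosK w) : PosK (z * w) := by
  obtain ⟨f, g, hg, rfl, hfg⟩ := hz
  obtain ⟨f', g', hg', rfl, hfg'⟩ := hw
  refine ⟨f * f', g * g', mul_ne_zero hg hg', ?_, ?_⟩
  · rw [div_mul_div_comm, ← map_mul, ← map_mul]
  · have h3 : (f * f') * (g * g') = (f * g) * (f' * g') := by ring
    rw [h3]
    exact isConed_PosM.mul hfg hfg'

lemma posK_total (z : KK) (hz : z ≠ 0) : PosK z ∨ PosK (-z) := by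
  obtain ⟨f, g, hgmem, hfg⟩ := IsFractionRing.div_surjective (A := MvP) z
  have hg : g ≠ 0 := nonZeroDivisors.ne_zero hgmem
  have hf : f ≠ 0 := by
    rintro rfl
    rw [map_zero, zero_div] at hfg
    exact hz hfg.symm
  rcases isConed_PosM.total _ (mul_ne_zero hf hg) with h | h
  · exact Or.inl ⟨f, g, hg, hfg.symm, h⟩
  · right
    refine ⟨-f, g, hg, ?_, ?_⟩
    · rw [map_neg, neg_div]
      show -z = -(iK f / iK g)
      rw [show iK f / iK g = z from hfg]
    · rw [neg_mul]
      exact h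

lemma posK_not_both (z : KK) (h1 : PosK z) (h2 : PosK (-z)) : False := by
  obtain ⟨f, g, hg, hz, hfg⟩ := h1
  obtain ⟨f', g', hg', hz', hfg'⟩ := h2
  have heq : iK f / iK g + iK f' / iK g' = 0 := by
    rw [← hz, ← hz']
    ring
  rw [div_add_div _ _ (iK_ne hg) (iK_ne hg')] at heq
  have hnum : iK (f * g' + f' * g) = 0 := by
    rw [map_add, map_mul, map_mul]
    have := (div_eq_zero_iff.mp heq).resolve_right (mul_ne_zero (iK_ne hg) (iK_ne hg'))
    linear_combination this
  have hcross : f * g' = -(f' * g) := by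
    have h0 : f * g' + f' * g = 0 := iK_inj (by rw [hnum, map_zero])
    linear_combination h0
  have hpos1 : PosM ((f * g) * (g' * g')) := isConed_PosM.mul hfg (posM_sq hg')
  have hpos2 : PosM ((f' * g') * (g * g)) := isConed_PosM.mul hfg' (posM_sq hg)
  have hident : (f * g) * (g' * g') = -((f' * g') * (g * g)) := by
    calc (f * g) * (g' * g') = (f * g') * (g * g') := by ring
    _ = (-(f' * g)) * (g * g') := by rw [hcross]
    _ = -((f' * g') * (g * g)) := by ring
  exact isConed_PosM.not_both _ hpos2 (by rw [← hident]; exact hpos1)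

end Cones

noncomputable section Orderings

def Pstar : Set KK := {z | z = 0 ∨ PosK z}

lemma isOrdering_Pstar : IsOrdering Pstar := by
  refine ⟨?_, ?_, ?_, ?_⟩
  · rintro x (rfl | hx) y (rfl | hy)
    · left; rw [add_zero]
    · right; rwa [zero_add]
    · right; rwa [add_zero]
    · exact Or.inr (posK_add hx hy)
  · rintro x (rfl | hx) y (rfl | hy)
    · left; rw [mul_zero]
    · left; rw [zero_mul]
    · left; rw [mul_zero]
    · exact Or.inr (posK_mul hx hy)
  · intro x
    by_cases hx : x = 0
    · exact Or.inl (Or.inl hx)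
    · rcases posK_total x hx with h | h
      · exact Or.inl (Or.inr h)
      · exact Or.inr (Or.inr h)
  · rintro x (rfl | hx) (h2 | h2)
    · rfl
    · rfl
    · exact neg_eq_zero.mp h2
    · exact absurd h2 (fun h => posK_not_both x hx h)

/-- the ordering `x = t², y = c t⁴ + t⁵ + s` with `0 < s ≪ tⁿ ≪ 1`. -/
def Pc (c : ℝ) : Set KK := {x | Psi c x ∈ Pstar}

lemma isOrdering_Pc (c : ℝ) : IsOrdering (Pc c) := by
  obtain ⟨hadd, hmul, htot, hzero⟩ := isOrdering_Pstar
  refine ⟨?_, ?_, ?_, ?_⟩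
  · intro x hx y hy
    show Psi c (x + y) ∈ Pstar
    rw [map_add]
    exact hadd _ hx _ hy
  · intro x hx y hy
    show Psi c (x * y) ∈ Pstar
    rw [map_mul]
    exact hmul _ hx _ hy
  · intro x
    rcases htot (Psi c x) with h | h
    · exact Or.inl h
    · right
      show Psi c (-x) ∈ Pstar
      rwa [map_neg]
  · intro x hx hnx
    have : Psi c (-x) ∈ Pstar := hnx
    rw [map_neg] at this
    have h0 : Psi c x = 0 := hzero _ hx this
    exact Psi_inj c (by rwa [map_zero])

end Orderings

section OrdLemmas

variable {F : Type*} [Field F] {P : Set F} (hP : IsOrdering P)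
include hP

lemma ord_zero_mem : (0 : F) ∈ P := by
  rcases hP.2.2.1 0 with h | h
  · exact h
  · rwa [neg_zero] at h

lemma ord_one_mem : (1 : F) ∈ P := by
  rcases hP.2.2.1 1 with h | h
  · exact h
  · have := hP.2.1 _ h _ h
    rwa [neg_mul_neg, one_mul] at this

lemma ord_sq_mem (z : F) : z * z ∈ P := by
  rcases hP.2.2.1 z with h | h
  · exact hP.2.1 _ h _ h
  · have := hP.2.1 _ h _ h
    rwa [neg_mul_neg] at this

lemma ord_natCast_mem (n : ℕ) : (n : F) ∈ P := by
  induction n with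
  | zero => simpa using ord_zero_mem hP
  | succ k ih =>
      have := hP.1 _ ih _ (ord_one_mem hP)
      rwa [show ((k : F) + 1) = ((k+1 : ℕ) : F) by push_cast; ring] at this

lemma ord_ratCast_mem [CharZero F] {q : ℚ} (hq : 0 ≤ q) : (q : F) ∈ P := by
  rcases eq_or_lt_of_le hq with h | h
  · rw [← h]; simpa using ord_zero_mem hP
  · have hden : ((q.den : F)) ≠ 0 := Nat.cast_ne_zero.mpr q.den_nz
    have hnum : (0:ℤ) < q.num := Rat.num_pos.mpr h
    set n : ℕ := q.num.toNat with hndef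
    have hn : (n : ℤ) = q.num := Int.toNat_of_nonneg hnum.le
    have key : (q : F) = ((n : F) * (q.den : F)) * (((q.den : F))⁻¹ * ((q.den : F))⁻¹) := by
      rw [Rat.cast_def]
      have hnF : ((q.num : ℤ) : F) = (n : F) := by
        rw [← hn]; push_cast; ring
      rw [hnF]
      field_simp
    rw [key]
    exact hP.2.1 _ (hP.2.1 _ (ord_natCast_mem hP n) _ (ord_natCast_mem hP q.den)) _
      (ord_sq_mem hP _)

lemma ord_not_both {x : F} (hx : x ∈ P) (hnx : -x ∈ P) : x = 0 := hP.2.2.2 x hx hnx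

end OrdLemmas

section Window

variable {F : Type*} [Field F] [CharZero F]

lemma ord_rat_bound {P : Set F} (hP : IsOrdering P) {h : F} {q q' : ℚ}
    (h1 : h - (q : F) ∈ P) (h2 : (q' : F) - h ∈ P) : q ≤ q' := by
  by_contra hlt
  push_neg at hlt
  have hsum : (q' : F) - (q : F) ∈ P := by
    have := hP.1 _ h1 _ h2
    rwa [show h - (q:F) + ((q':F) - h) = (q':F) - (q:F) by ring] at this
  have hpos : ((q - q' : ℚ) : F) ∈ P := ord_ratCast_mem hP (by linarith)
  have h0 : (q' : F) - (q : F) = 0 := by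
    refine hP.2.2.2 _ hsum ?_
    rwa [show -((q':F) - (q:F)) = ((q - q' : ℚ) : F) by push_cast; ring]
  have : (q' : ℚ) = q := by exact_mod_cast sub_eq_zero.mp h0
  linarith

lemma window_iff {P : Set F} (hP : IsOrdering P) (h : F) (α β : ℚ) :
    (((α : ℝ) : WithTop ℝ) < rPlace P h ∧ rPlace P h < ((β : ℝ) : WithTop ℝ))
      ↔ ((∃ q : ℚ, α < q ∧ h - (q : F) ∈ P) ∧ (∃ q' : ℚ, q' < β ∧ (q' : F) - h ∈ P)) := by
  set S : Set ℝ := {r : ℝ | ∃ q : ℚ, r = (q : ℝ) ∧ h - (q : F) ∈ P} with hSdef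
  constructor
  · rintro ⟨hlo, hhi⟩
    have hA : h ∈ orderValRing P := by
      by_contra hA
      rw [rPlace, if_neg hA] at hhi
      exact not_top_lt hhi
    rw [rPlace, if_pos hA] at hlo hhi
    rw [WithTop.coe_lt_coe] at hlo hhi
    obtain ⟨q₀, hq₀pos, hsub, haddm⟩ := hA
    have hSne : S.Nonempty := by
      refine ⟨((-(q₀+1) : ℚ) : ℝ), -(q₀+1), rfl, ?_⟩
      have := hP.1 _ haddm _ (ord_one_mem hP)
      rwa [show ((q₀:F) + h) + 1 = h - ((-(q₀+1) : ℚ) : F) by push_cast; ring] at this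
    have hbddS : BddAbove S := by
      refine ⟨(q₀ : ℝ), ?_⟩
      rintro r ⟨p, rfl, hp⟩
      exact_mod_cast ord_rat_bound hP hp hsub
    constructor
    · obtain ⟨r, ⟨p, rfl, hp⟩, hr⟩ := exists_lt_of_lt_csSup hSne hlo
      exact ⟨p, by exact_mod_cast hr, hp⟩
    · obtain ⟨q', hq'1, hq'2⟩ := exists_rat_btwn hhi
      refine ⟨q', by exact_mod_cast hq'2, ?_⟩
      rcases hP.2.2.1 ((q' : F) - h) with hmem | hmem
      · exact hmem
      · exfalso
        have hin : ((q' : ℚ) : ℝ) ∈ S := by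
          refine ⟨q', rfl, ?_⟩
          rwa [show -((q':F) - h) = h - (q':F) by ring] at hmem
        exact absurd hq'1 (not_lt.mpr (le_csSup hbddS hin))
  · rintro ⟨⟨q, hq, hmem⟩, ⟨q', hq', hmem'⟩⟩
    have hub : ∀ r ∈ S, r ≤ (q' : ℝ) := by
      rintro r ⟨p, rfl, hp⟩
      exact_mod_cast ord_rat_bound hP hp hmem'
    have hSne : S.Nonempty := ⟨(q : ℝ), q, rfl, hmem⟩
    have hbdd : BddAbove S := ⟨(q' : ℝ), hub⟩
    have hA : h ∈ orderValRing P := by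
      refine ⟨max |q| |q'| + 1, by positivity, ?_, ?_⟩
      · have h1 : ((max |q| |q'| + 1 - q' : ℚ) : F) ∈ P :=
          ord_ratCast_mem hP (by
            have h2 := le_max_right |q| |q'|
            have h3 := le_abs_self q'
            linarith)
        have := hP.1 _ h1 _ hmem'
        rwa [show ((max |q| |q'| + 1 - q' : ℚ) : F) + ((q':F) - h)
            = ((max |q| |q'| + 1 : ℚ) : F) - h by push_cast; ring] at this
      · have h1 : ((max |q| |q'| + 1 + q : ℚ) : F) ∈ P :=
          ord_ratCast_mem hP (by
            have h2 := le_max_left |q| |q'|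
            have h3 := neg_abs_le q
            linarith)
        have := hP.1 _ h1 _ hmem
        rwa [show ((max |q| |q'| + 1 + q : ℚ) : F) + (h - (q:F))
            = ((max |q| |q'| + 1 : ℚ) : F) + h by push_cast; ring] at this
    rw [rPlace, if_pos hA]
    constructor
    · rw [WithTop.coe_lt_coe]
      calc (α : ℝ) < (q : ℝ) := by exact_mod_cast hq
      _ ≤ sSup S := le_csSup hbdd ⟨q, rfl, hmem⟩
    · rw [WithTop.coe_lt_coe]
      calc sSup S ≤ (q' : ℝ) := csSup_le hSne hub
      _ < (β : ℝ) := by exact_mod_cast hq'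

lemma rPlace_top_iff {P : Set F} (h : F) :
    rPlace P h = ⊤ ↔ h ∉ orderValRing P := by
  constructor
  · intro heq hA
    rw [rPlace, if_pos hA] at heq
    exact (WithTop.coe_ne_top) heq
  · intro hA
    rw [rPlace, if_neg hA]

end Window

noncomputable section Computations

open Polynomial

lemma tc_coeff0 {R : Type*} [Semiring R] {p : Polynomial R} (h : p.coeff 0 ≠ 0) :
    p.trailingCoeff = p.coeff 0 := by
  unfold Polynomial.trailingCoeff
  rw [Polynomial.natTrailingDegree_eq_zero.mpr (Or.inr h)]

lemma tc_X_pow {R : Type*} [Semiring R] [Nontrivial R] (n : ℕ) :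
    (Polynomial.X ^ n : Polynomial R).trailingCoeff = 1 := by
  unfold Polynomial.trailingCoeff
  rw [Polynomial.natTrailingDegree_X_pow, Polynomial.coeff_X_pow, if_pos rfl]

lemma tc_X {R : Type*} [Semiring R] [Nontrivial R] :
    (Polynomial.X : Polynomial R).trailingCoeff = 1 := by
  simpa using tc_X_pow (R := R) 1

lemma tc_C {R : Type*} [Semiring R] (a : R) : (Polynomial.C a).trailingCoeff = a := by
  unfold Polynomial.trailingCoeff
  rw [Polynomial.natTrailingDegree_C, Polynomial.coeff_C_zero]

lemma coeff0_quad (A B D : Polynomial ℝ) :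
    (Polynomial.C A + Polynomial.C B * Polynomial.X
      + Polynomial.C D * Polynomial.X^2 : PP).coeff 0 = A := by
  simp [Polynomial.coeff_C_mul, Polynomial.coeff_X_pow]

lemma coeff0_lin (B D : Polynomial ℝ) :
    (Polynomial.C B + Polynomial.C D * Polynomial.X : PP).coeff 0 = B := by
  simp [Polynomial.coeff_C_mul]

lemma tc_quad_A {A B D : Polynomial ℝ} (hA : A ≠ 0) :
    (Polynomial.C A + Polynomial.C B * Polynomial.X
      + Polynomial.C D * Polynomial.X^2 : PP).trailingCoeff = A := by
  rw [tc_coeff0 (by rw [coeff0_quad]; exact hA), coeff0_quad]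

lemma tc_lin_B {B D : Polynomial ℝ} (hB : B ≠ 0) :
    (Polynomial.X * (Polynomial.C B + Polynomial.C D * Polynomial.X) : PP).trailingCoeff
      = B := by
  rw [trailingCoeff_mul, tc_X, one_mul, tc_coeff0 (by rw [coeff0_lin]; exact hB), coeff0_lin]

/-- the numerator polynomial `((d·y⁴ + y⁵ + x)² − q·y¹⁰)`. -/
def Fpoly (d q : ℝ) : MvP :=
  (MvPolynomial.C d * (MvPolynomial.X 1)^4 + (MvPolynomial.X 1)^5 + MvPolynomial.X 0)^2
    - MvPolynomial.C q * (MvPolynomial.X 1)^10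

def Gpoly : MvP := (MvPolynomial.X 1)^10

lemma Phi_FG (d q : ℝ) :
    Phi (Fpoly d q * Gpoly)
      = Polynomial.C ((((Polynomial.C d * Polynomial.X^4 + Polynomial.X^5)^2
            - Polynomial.C q * Polynomial.X^10) * Polynomial.X^10 : Polynomial ℝ))
        + Polynomial.C ((2 * (Polynomial.C d * Polynomial.X^4 + Polynomial.X^5)
            * Polynomial.X^10 : Polynomial ℝ)) * Polynomial.X
        + Polynomial.C ((Polynomial.X^10 : Polynomial ℝ)) * Polynomial.X^2 := by
  simp only [Fpoly, Gpoly, map_mul, map_add, map_sub, map_pow, Phi_X0, Phi_X1, Phi_C,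
    Polynomial.C_mul, Polynomial.C_add, Polynomial.C_sub, Polynomial.C_pow, map_ofNat]
  ring

lemma L1 {d : ℝ} (hd : d ≠ 0) (q : ℝ) : PosM (Fpoly d q * Gpoly) := by
  unfold PosM Pos2
  rw [Phi_FG]
  set A : Polynomial ℝ := ((Polynomial.C d * Polynomial.X^4 + Polynomial.X^5)^2
      - Polynomial.C q * Polynomial.X^10) * Polynomial.X^10 with hA
  have hAform : A = Polynomial.X^18
      * (Polynomial.C (d*d) + Polynomial.C (2*d) * Polynomial.X
          + Polynomial.C (1-q) * Polynomial.X^2) := by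
    rw [hA]
    simp only [Polynomial.C_mul, Polynomial.C_sub, Polynomial.C_add, map_ofNat, Polynomial.C_1]
    ring
  have htcA : A.trailingCoeff = d * d := by
    rw [hAform, trailingCoeff_mul, tc_X_pow, one_mul]
    have : (Polynomial.C (d*d) + Polynomial.C (2*d) * Polynomial.X
        + Polynomial.C (1-q) * Polynomial.X^2 : Polynomial ℝ).coeff 0 = d * d := by
      simp [Polynomial.coeff_C_mul, Polynomial.coeff_X_pow]
    rw [tc_coeff0 (by rw [this]; exact mul_ne_zero hd hd), this]
  have hAne : A ≠ 0 := by
    intro h0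
    rw [h0] at htcA
    exact mul_ne_zero hd hd (by simpa using htcA.symm)
  rw [tc_quad_A hAne, htcA]
  exact mul_self_pos.mpr hd

lemma L2 {q : ℝ} (hq : q < 1) : PosM (Fpoly 0 q * Gpoly) := by
  unfold PosM Pos2
  rw [Phi_FG]
  set A : Polynomial ℝ := ((Polynomial.C (0:ℝ) * Polynomial.X^4 + Polynomial.X^5)^2
      - Polynomial.C q * Polynomial.X^10) * Polynomial.X^10 with hA
  have hAform : A = Polynomial.C (1-q) * Polynomial.X^20 := by
    rw [hA]
    simp only [Polynomial.C_sub, Polynomial.C_1, Polynomial.C_0]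
    ring
  have htcA : A.trailingCoeff = 1 - q := by
    rw [hAform, trailingCoeff_mul, tc_X_pow, mul_one, tc_C]
  have hAne : A ≠ 0 := fun h0 => by
    rw [h0] at htcA
    simp only [Polynomial.trailingCoeff_zero] at htcA
    linarith
  rw [tc_quad_A hAne, htcA]
  linarith

lemma L3 : PosM (Fpoly 0 1 * Gpoly) := by
  unfold PosM Pos2
  have hform : Phi (Fpoly 0 1 * Gpoly)
      = Polynomial.X * (Polynomial.C (2 * Polynomial.X^15 : Polynomial ℝ)
          + Polynomial.C ((Polynomial.X^10 : Polynomial ℝ)) * Polynomial.X) := by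
    rw [Phi_FG]
    simp only [Polynomial.C_mul, Polynomial.C_add, Polynomial.C_sub, Polynomial.C_pow,
      map_ofNat, Polynomial.C_0, Polynomial.C_1]
    ring
  have hBtc : (2 * Polynomial.X^15 : Polynomial ℝ).trailingCoeff = 2 := by
    have h2 : (2 : Polynomial ℝ) = Polynomial.C 2 := (map_ofNat (Polynomial.C : ℝ →+* Polynomial ℝ) 2).symm
    rw [h2, trailingCoeff_mul, tc_C, tc_X_pow, mul_one]
  have hBne : (2 * Polynomial.X^15 : Polynomial ℝ) ≠ 0 := by
    intro h0
    rw [h0] at hBtc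
    simp only [Polynomial.trailingCoeff_zero] at hBtc
    norm_num at hBtc
  rw [hform, tc_lin_B hBne, hBtc]
  norm_num

lemma L4 {q : ℝ} (h1 : 1 < q) : PosM (-(Fpoly 0 q * Gpoly)) := by
  unfold PosM Pos2
  have hform : Phi (-(Fpoly 0 q * Gpoly))
      = Polynomial.C (Polynomial.C (q-1) * Polynomial.X^20 : Polynomial ℝ)
        + Polynomial.C (-(2 * (Polynomial.C (0:ℝ) * Polynomial.X^4 + Polynomial.X^5)
            * Polynomial.X^10) : Polynomial ℝ) * Polynomial.X
        + Polynomial.C (-(Polynomial.X^10 : Polynomial ℝ)) * Polynomial.X^2 := by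
    rw [map_neg, Phi_FG]
    simp only [Polynomial.C_mul, Polynomial.C_add, Polynomial.C_sub, Polynomial.C_pow,
      map_ofNat, Polynomial.C_0, Polynomial.C_1, map_neg]
    ring
  have htcA : (Polynomial.C (q-1) * Polynomial.X^20 : Polynomial ℝ).trailingCoeff = q - 1 := by
    rw [trailingCoeff_mul, tc_C, tc_X_pow, mul_one]
  have hAne : (Polynomial.C (q-1) * Polynomial.X^20 : Polynomial ℝ) ≠ 0 := by
    intro h0
    rw [h0] at htcA
    simp only [Polynomial.trailingCoeff_zero] at htcA
    linarith
  rw [hform, tc_quad_A hAne, htcA]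
  linarith

end Computations

noncomputable section Family

def aK : KK := iK (MvPolynomial.X 0)
def bK : KK := iK (MvPolynomial.X 1)

/-- the element `(y − c·x²)²/x⁵` of `ℝ(x,y)`. -/
def hcK (c : ℝ) : KK := (bK - iK (MvPolynomial.C c) * aK^2)^2 / aK^5

lemma aK_ne : aK ≠ 0 := iK_ne (MvPolynomial.X_ne_zero 0)
lemma bK_ne : bK ≠ 0 := iK_ne (MvPolynomial.X_ne_zero 1)
lemma Gne : Gpoly ≠ 0 := pow_ne_zero _ (MvPolynomial.X_ne_zero 1)

lemma rat_iK (q : ℚ) : ((q : ℚ) : KK) = iK (MvPolynomial.C ((q : ℚ) : ℝ)) := by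
  have h := map_ratCast (iK.comp (MvPolynomial.C : ℝ →+* MvP)) q
  rw [RingHom.comp_apply] at h
  exact h.symm

lemma Psi_hcK (c' c : ℝ) (q : ℚ) :
    Psi c' (hcK c - (q : KK)) = iK (Fpoly (c' - c) (q : ℝ)) / iK Gpoly := by
  have hq : Psi c' ((q : ℚ) : KK) = ((q : ℚ) : KK) := map_ratCast _ q
  have ha : Psi c' aK = bK ^ 2 := by
    simp [aK, bK, Psi_iK, map_pow]
  have hb : Psi c' bK = iK (MvPolynomial.C c') * bK^4 + bK^5 + aK := by
    simp [aK, bK, Psi_iK, map_add, map_mul, map_pow]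
  have hc : Psi c' (iK (MvPolynomial.C c)) = iK (MvPolynomial.C c) := by
    simp [Psi_iK]
  have hFG : iK (Fpoly (c' - c) ((q:ℚ) : ℝ))
      = (iK (MvPolynomial.C (c' - c)) * bK^4 + bK^5 + aK)^2
          - iK (MvPolynomial.C ((q:ℚ):ℝ)) * bK^10 := by
    simp only [Fpoly, map_sub, map_add, map_mul, map_pow, aK, bK]
  have hG : iK Gpoly = bK^10 := by simp only [Gpoly, map_pow, bK]
  have hcc : iK (MvPolynomial.C (c' - c)) = iK (MvPolynomial.C c') - iK (MvPolynomial.C c) := by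
    rw [show MvPolynomial.C (c' - c) = MvPolynomial.C c' - MvPolynomial.C c from map_sub _ _ _,
      map_sub]
  simp only [hcK, map_sub, map_div₀, map_pow, map_mul, hq, ha, hb, hc]
  rw [rat_iK, hFG, hG, hcc]
  have hb10 : bK ^ 10 ≠ 0 := pow_ne_zero _ bK_ne
  field_simp [bK_ne]
  ring

lemma mem_le_one (c : ℝ) {q : ℚ} (hq : (q : ℝ) ≤ 1) : hcK c - (q : KK) ∈ Pc c := by
  show Psi c (hcK c - (q : KK)) ∈ Pstar
  refine Or.inr ⟨Fpoly 0 ((q:ℚ):ℝ), Gpoly, Gne, ?_, ?_⟩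
  · have h := Psi_hcK c c q
    rwa [sub_self] at h
  · rcases lt_or_eq_of_le hq with h | h
    · exact L2 h
    · rw [h]; exact L3

lemma psi_neg_swap (c' c : ℝ) (q : ℚ) :
    Psi c' ((q : KK) - hcK c) = -(Psi c' (hcK c - (q : KK))) := by
  rw [← map_neg]
  congr 1
  ring

lemma notmem_gt_one (c : ℝ) {q : ℚ} (hq : 1 < (q : ℝ)) :
    ((q : KK) - hcK c ∈ Pc c) ∧ (hcK c - (q : KK) ∉ Pc c) := by
  have hval : Psi c (hcK c - (q : KK)) = iK (Fpoly 0 ((q:ℚ):ℝ)) / iK Gpoly := by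
    have h := Psi_hcK c c q
    rwa [sub_self] at h
  have hpos : PosK (Psi c ((q : KK) - hcK c)) := by
    refine ⟨-(Fpoly 0 ((q:ℚ):ℝ)), Gpoly, Gne, ?_, ?_⟩
    · rw [psi_neg_swap, hval, map_neg, neg_div]
    · rw [neg_mul]
      exact L4 hq
  refine ⟨Or.inr hpos, ?_⟩
  intro hmem
  rcases hmem with h0 | hp
  · apply posK_ne_zero hpos
    rw [psi_neg_swap, h0, neg_zero]
  · rw [psi_neg_swap] at hpos
    exact posK_not_both _ hp hpos

lemma mem_other {c' c : ℝ} (hne : c' ≠ c) (q : ℚ) :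
    (hcK c - (q : KK) ∈ Pc c') ∧ ((q : KK) - hcK c ∉ Pc c') := by
  have hpos : PosK (Psi c' (hcK c - (q : KK))) :=
    ⟨Fpoly (c' - c) ((q:ℚ):ℝ), Gpoly, Gne, Psi_hcK c' c q, L1 (sub_ne_zero.mpr hne) _⟩
  refine ⟨Or.inr hpos, ?_⟩
  intro hmem
  rcases hmem with h0 | hp
  · apply posK_ne_zero hpos
    rw [psi_neg_swap] at h0
    simpa using neg_eq_zero.mp h0
  · rw [psi_neg_swap] at hp
    exact posK_not_both _ hpos hp

lemma rPlace_self (c : ℝ) : rPlace (Pc c) (hcK c) = ((1 : ℝ) : WithTop ℝ) := by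
  have hA : hcK c ∈ orderValRing (Pc c) := by
    refine ⟨2, by norm_num, ?_, ?_⟩
    · exact (notmem_gt_one c (q := 2) (by norm_num)).1
    · have h := mem_le_one c (q := -2) (by norm_num)
      rwa [show hcK c - ((-2 : ℚ) : KK) = ((2:ℚ) : KK) + hcK c by push_cast; ring] at h
  rw [rPlace, if_pos hA]
  congr 1
  apply IsGreatest.csSup_eq
  constructor
  · exact ⟨1, by norm_num, by simpa using mem_le_one c (q := 1) (by norm_num)⟩
  · rintro r ⟨p, rfl, hp⟩
    by_contra hgt
    push_neg at hgt
    exact (notmem_gt_one c hgt).2 hp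

lemma rPlace_other {c' c : ℝ} (hne : c' ≠ c) : rPlace (Pc c') (hcK c) = ⊤ := by
  rw [rPlace_top_iff]
  rintro ⟨q, hqpos, hsub, -⟩
  exact (mem_other hne q).2 hsub

end Family

section Topology

variable (K : Type*) [Field K]

/-- embedding of the order space into `K → Bool`. -/
noncomputable def eMap : OrderSpace K → (K → Bool) := fun P a => decide (a ∈ P.1)

variable {K}

lemma eMap_true {P : OrderSpace K} {a : K} : eMap K P a = true ↔ a ∈ P.1 := by
  simp [eMap]

lemma eMap_false {P : OrderSpace K} {a : K} : eMap K P a = false ↔ a ∉ P.1 := by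
  simp [eMap]

lemma ord_mem_zero (P : OrderSpace K) : (0 : K) ∈ P.1 := ord_zero_mem P.2

lemma H_zero : {P : OrderSpace K | (0:K) ∈ P.1} = Set.univ := by
  ext P
  simp [ord_mem_zero]

lemma H_compl {a : K} (ha : a ≠ 0) :
    {P : OrderSpace K | a ∈ P.1}ᶜ = {P : OrderSpace K | -a ∈ P.1} := by
  ext P
  simp only [Set.mem_compl_iff, Set.mem_setOf_eq]
  constructor
  · intro h
    rcases P.2.2.2.1 a with h1 | h1
    · exact absurd h1 h
    · exact h1
  · intro h hmem
    exact ha (P.2.2.2.2 a hmem h)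

lemma H_open (a : K) : IsOpen {P : OrderSpace K | a ∈ P.1} := by
  by_cases ha : a = 0
  · subst ha
    rw [H_zero]
    exact isOpen_univ
  · exact TopologicalSpace.GenerateOpen.basic _ ⟨a, ha, rfl⟩

lemma H_compl_open (a : K) : IsOpen {P : OrderSpace K | a ∈ P.1}ᶜ := by
  by_cases ha : a = 0
  · subst ha
    rw [H_zero, Set.compl_univ]
    exact isOpen_empty
  · rw [H_compl ha]
    exact H_open (-a)

lemma bool_set_cases (s : Set Bool) :
    s = ∅ ∨ s = {true} ∨ s = {false} ∨ s = Set.univ := by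
  by_cases ht : true ∈ s <;> by_cases hf : false ∈ s
  · right; right; right; ext x; cases x <;> simp [ht, hf]
  · right; left; ext x; cases x <;> simp [ht, hf]
  · right; right; left; ext x; cases x <;> simp [ht, hf]
  · left; ext x; cases x <;> simp [ht, hf]

lemma eMap_pre_true (a : K) :
    (fun P => eMap K P a) ⁻¹' {true} = {P : OrderSpace K | a ∈ P.1} := by
  ext P
  simp [eMap_true]

lemma eMap_pre_false (a : K) :
    (fun P => eMap K P a) ⁻¹' {false} = {P : OrderSpace K | a ∈ P.1}ᶜ := by
  ext P
  simp [eMap, eMap_false]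

lemma eMap_pre_open (a : K) (s : Set Bool) :
    IsOpen ((fun P => eMap K P a) ⁻¹' s) := by
  rcases bool_set_cases s with rfl | rfl | rfl | rfl
  · simp only [Set.preimage_empty]
    exact isOpen_empty
  · rw [eMap_pre_true]
    exact H_open a
  · rw [eMap_pre_false]
    exact H_compl_open a
  · simp only [Set.preimage_univ]
    exact isOpen_univ

lemma inducing_eMap : Topology.IsInducing (eMap K) := by
  constructor
  apply le_antisymm
  · -- order topology finer than induced
    have h1 : TopologicalSpace.induced (eMap K) (inferInstance : TopologicalSpace (K → Bool))
        = ⨅ a : K, TopologicalSpace.induced (fun P => eMap K P a)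
            (inferInstance : TopologicalSpace Bool) := by
      rw [show (inferInstance : TopologicalSpace (K → Bool))
          = ⨅ a : K, TopologicalSpace.induced (fun χ : K → Bool => χ a)
              (inferInstance : TopologicalSpace Bool) from rfl, induced_iInf]
      congr 1
      ext a
      rw [induced_compose]
    rw [h1]
    refine le_iInf fun a => ?_
    rw [← coinduced_le_iff_le_induced, TopologicalSpace.le_def]
    intro s _
    have : IsOpen ((fun P => eMap K P a) ⁻¹' s) := eMap_pre_open a s
    exact this
  · -- induced finer than generateFrom
    apply le_generateFrom
    rintro s ⟨a, ha, rfl⟩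
    letI tI := TopologicalSpace.induced (eMap K) (inferInstance : TopologicalSpace (K → Bool))
    show tI.IsOpen {P : OrderSpace K | a ∈ P.1}
    refine ⟨(fun χ : K → Bool => χ a) ⁻¹' {true}, ?_, ?_⟩
    · exact (continuous_apply a).isOpen_preimage _ (isOpen_discrete _)
    · rw [← eMap_pre_true a]
      rfl

lemma cyl_closed (z : K) (b : Bool) : IsClosed {χ : K → Bool | χ z = b} := by
  have h : {χ : K → Bool | χ z = b} = (fun χ : K → Bool => χ z) ⁻¹' {b} := rfl
  rw [h]
  exact IsClosed.preimage (continuous_apply z) (isClosed_discrete _)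

lemma cyl_compl (z : K) : {χ : K → Bool | χ z = true}ᶜ = {χ : K → Bool | χ z = false} := by
  ext χ
  simp

lemma closed_range_eMap : IsClosed (Set.range (eMap K)) := by
  have hrange : Set.range (eMap K)
      = (⋂ x : K, ⋂ y : K,
          ({χ : K → Bool | χ x = true}ᶜ ∪ ({χ | χ y = true}ᶜ ∪ {χ | χ (x+y) = true})))
        ∩ ((⋂ x : K, ⋂ y : K,
          ({χ : K → Bool | χ x = true}ᶜ ∪ ({χ | χ y = true}ᶜ ∪ {χ | χ (x*y) = true})))
        ∩ ((⋂ x : K, ({χ : K → Bool | χ x = true} ∪ {χ | χ (-x) = true}))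
        ∩ (⋂ x : {x : K // x ≠ 0},
            ({χ : K → Bool | χ x.1 = true}ᶜ ∪ {χ | χ (-x.1) = true}ᶜ)))) := by
    ext χ
    simp only [Set.mem_range, Set.mem_inter_iff, Set.mem_iInter, Set.mem_union,
      Set.mem_compl_iff, Set.mem_setOf_eq]
    constructor
    · rintro ⟨P, rfl⟩
      refine ⟨?_, ?_, ?_, ?_⟩
      · intro x y
        rcases Classical.em (x ∈ P.1) with hx | hx
        · rcases Classical.em (y ∈ P.1) with hy | hy
          · exact Or.inr (Or.inr (eMap_true.mpr (P.2.1 x hx y hy)))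
          · exact Or.inr (Or.inl (fun h => hy (eMap_true.mp h)))
        · exact Or.inl (fun h => hx (eMap_true.mp h))
      · intro x y
        rcases Classical.em (x ∈ P.1) with hx | hx
        · rcases Classical.em (y ∈ P.1) with hy | hy
          · exact Or.inr (Or.inr (eMap_true.mpr (P.2.2.1 x hx y hy)))
          · exact Or.inr (Or.inl (fun h => hy (eMap_true.mp h)))
        · exact Or.inl (fun h => hx (eMap_true.mp h))
      · intro x
        rcases P.2.2.2.1 x with h | h
        · exact Or.inl (eMap_true.mpr h)
        · exact Or.inr (eMap_true.mpr h)
      · rintro ⟨x, hx⟩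
        rcases Classical.em (x ∈ P.1) with h1 | h1
        · refine Or.inr (fun h2 => hx (P.2.2.2.2 x h1 (eMap_true.mp h2)))
        · exact Or.inl (fun h2 => h1 (eMap_true.mp h2))
    · rintro ⟨h1, h2, h3, h4⟩
      set Pset : Set K := {a : K | χ a = true} with hPset
      have hOrd : IsOrdering Pset := by
        refine ⟨?_, ?_, ?_, ?_⟩
        · intro x hx y hy
          rcases h1 x y with h | h | h
          · exact absurd hx h
          · exact absurd hy h
          · exact h
        · intro x hx y hy
          rcases h2 x y with h | h | h
          · exact absurd hx h
          · exact absurd hy h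
          · exact h
        · intro x
          exact h3 x
        · intro x hx hnx
          by_contra hx0
          rcases h4 ⟨x, hx0⟩ with h | h
          · exact h hx
          · exact h hnx
      refine ⟨⟨Pset, hOrd⟩, funext fun a => ?_⟩
      by_cases hb : χ a = true
      · have ha : a ∈ Pset := hb
        rw [hb]
        exact eMap_true.mpr ha
      · rw [Bool.not_eq_true] at hb
        rw [hb]
        refine eMap_false.mpr ?_
        intro hmem
        have h5 : χ a = true := hmem
        rw [h5] at hb
        exact absurd hb (by simp)
  rw [hrange]
  refine IsClosed.inter ?_ (IsClosed.inter ?_ (IsClosed.inter ?_ ?_))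
  · exact isClosed_iInter fun x => isClosed_iInter fun y =>
      IsClosed.union (by rw [cyl_compl]; exact cyl_closed _ _)
        (IsClosed.union (by rw [cyl_compl]; exact cyl_closed _ _) (cyl_closed _ _))
  · exact isClosed_iInter fun x => isClosed_iInter fun y =>
      IsClosed.union (by rw [cyl_compl]; exact cyl_closed _ _)
        (IsClosed.union (by rw [cyl_compl]; exact cyl_closed _ _) (cyl_closed _ _))
  · exact isClosed_iInter fun x => IsClosed.union (cyl_closed _ _) (cyl_closed _ _)
  · exact isClosed_iInter fun x =>
      IsClosed.union (by rw [cyl_compl]; exact cyl_closed _ _)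
        (by rw [cyl_compl]; exact cyl_closed _ _)

lemma compactSpace_orderSpace : CompactSpace (OrderSpace K) := by
  constructor
  rw [inducing_eMap.isCompact_iff, Set.image_univ]
  exact (closed_range_eMap).isCompact

lemma lambdaMap_surjective : Function.Surjective (lambdaMap K) := by
  rintro ⟨φ, P, hP, hφ⟩
  exact ⟨⟨P, hP⟩, Subtype.ext hφ.symm⟩

lemma compactSpace_placeSpace : CompactSpace (PlaceSpace K) := by
  haveI := compactSpace_orderSpace (K := K)
  constructor
  have h : (Set.univ : Set (PlaceSpace K)) = lambdaMap K '' Set.univ := by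
    rw [Set.image_univ, (lambdaMap_surjective (K := K)).range_eq]
  rw [h]
  exact isCompact_univ.image continuous_coinduced_rng

end Topology

noncomputable section Main

def Pcord (c : ℝ) : OrderSpace KK := ⟨Pc c, isOrdering_Pc c⟩

def mu (c : ℝ) : PlaceSpace KK := lambdaMap KK (Pcord c)

def Uc (c : ℝ) : Set (PlaceSpace KK) :=
  {φ | ((((1:ℚ)/2 : ℚ) : ℝ) : WithTop ℝ) < φ.1 (hcK c)
    ∧ φ.1 (hcK c) < ((((3:ℚ)/2 : ℚ) : ℝ) : WithTop ℝ)}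

lemma Uc_open (c : ℝ) : IsOpen (Uc c) := by
  rw [isOpen_coinduced]
  have hpre : lambdaMap KK ⁻¹' (Uc c)
      = {P : OrderSpace KK | ((((1:ℚ)/2 : ℚ) : ℝ) : WithTop ℝ) < rPlace P.1 (hcK c)
          ∧ rPlace P.1 (hcK c) < ((((3:ℚ)/2 : ℚ) : ℝ) : WithTop ℝ)} := rfl
  rw [hpre]
  have hset : {P : OrderSpace KK | ((((1:ℚ)/2 : ℚ) : ℝ) : WithTop ℝ) < rPlace P.1 (hcK c)
          ∧ rPlace P.1 (hcK c) < ((((3:ℚ)/2 : ℚ) : ℝ) : WithTop ℝ)}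
      = ⋃ (q : ℚ) (_ : (1:ℚ)/2 < q) (q' : ℚ) (_ : q' < (3:ℚ)/2),
          ({P : OrderSpace KK | hcK c - (q : KK) ∈ P.1}
            ∩ {P : OrderSpace KK | ((q' : KK) - hcK c) ∈ P.1}) := by
    ext P
    simp only [Set.mem_iUnion, Set.mem_inter_iff, Set.mem_setOf_eq]
    rw [window_iff P.2]
    constructor
    · rintro ⟨⟨q, hq, h⟩, ⟨q', hq', h'⟩⟩
      exact ⟨q, hq, q', hq', h, h'⟩
    · rintro ⟨q, hq, q', hq', h, h'⟩
      exact ⟨⟨q, hq, h⟩, ⟨q', hq', h'⟩⟩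
  rw [hset]
  exact isOpen_iUnion fun q => isOpen_iUnion fun _ => isOpen_iUnion fun q' =>
    isOpen_iUnion fun _ => (H_open _).inter (H_open _)

lemma mu_mem (c : ℝ) : mu c ∈ Uc c := by
  have hval : (mu c).1 (hcK c) = ((1 : ℝ) : WithTop ℝ) := rPlace_self c
  constructor
  · rw [hval, WithTop.coe_lt_coe]
    norm_num
  · rw [hval, WithTop.coe_lt_coe]
    norm_num

lemma mu_not_mem {c' c : ℝ} (hne : c' ≠ c) : mu c' ∉ Uc c := by
  intro hmem
  have hval : (mu c').1 (hcK c) = ⊤ := rPlace_other hne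
  have h2 := hmem.2
  rw [hval] at h2
  exact absurd h2 (by simp)

end Main

theorem aux_not_metrizable :
    ¬ TopologicalSpace.MetrizableSpace
        (PlaceSpace (FractionRing (MvPolynomial (Fin 2) ℝ))) := by
  intro hMet
  letI : MetricSpace (PlaceSpace KK) :=
    TopologicalSpace.metrizableSpaceMetric (PlaceSpace KK)
  haveI : CompactSpace (PlaceSpace KK) := compactSpace_placeSpace
  haveI : ProperSpace (PlaceSpace KK) := proper_of_compact
  haveI : SecondCountableTopology (PlaceSpace KK) := secondCountable_of_proper
  obtain ⟨B, hBc, -, hBasis⟩ := TopologicalSpace.exists_countable_basis (PlaceSpace KK)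
  have hchoice : ∀ c : ℝ, ∃ v ∈ B, mu c ∈ v ∧ v ⊆ Uc c := fun c =>
    hBasis.exists_subset_of_mem_open (mu_mem c) (Uc_open c)
  choose v hvB hmuv hvU using hchoice
  have hinj : Function.Injective v := by
    intro c c' heq
    by_contra hne
    have hmem : mu c' ∈ Uc c := hvU c (by rw [heq]; exact hmuv c')
    exact mu_not_mem (fun h : c' = c => hne h.symm) hmem
  have hcnt : Set.Countable (Set.range v) := hBc.mono (Set.range_subset_iff.mpr hvB)
  haveI : Countable (Set.range v) := hcnt.to_subtype
  haveI : Countable ℝ := Countable.of_equiv _ (Equiv.ofInjective v hinj).symm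
  exact Cardinal.not_countable_real (Set.countable_univ)

/-- STATEMENT 19: the space `M(ℝ(X,Y))` of ℝ-places of the field `ℝ(X,Y)` of rational
functions in two variables (the fraction field of `ℝ[X,Y]`), with the quotient topology
induced from the Harrison topology, is not metrizable. -/
theorem placeSpace_R_X_Y_not_metrizable :
    ¬ TopologicalSpace.MetrizableSpace
        (PlaceSpace (FractionRing (MvPolynomial (Fin 2) ℝ))) := by
  exact aux_not_metrizable
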